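/- Let d = (d_1, ..., d_n) be a non-increasing sequence of positive integers whose sum is even and at most 2n - 2, with n_1(d) ≥ Σ_{i=1}^{n_{≥2}(d)} d_i. Then sl(d) = n - a(d) = n_{≥2}(d) + (n_1(d) - Σ_{i=1}^{n_{≥2}(d)} d_i)/2. -/

import Mathlib

open Finset

/-- The degree of a vertex in a simple graph. -/
noncomputable def deg {V : Type*} (G : SimpleGraph V) (v : V) : ℕ := Nat.card {u // G.Adj v u}

/-- `D` is a dominating set of `G`. -/
def DomSet {V : Type*} (G : SimpleGraph V) (D : Set V) : Prop := ∀ v ∉ D, ∃ u ∈ D, G.Adj u v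

/-- `S` is an independent set of `G`. -/
def IndepSet {V : Type*} (G : SimpleGraph V) (S : Set V) : Prop :=
  ∀ u ∈ S, ∀ v ∈ S, ¬ G.Adj u v

/-- The domination number of `G`. -/
noncomputable def domNum {V : Type*} [Fintype V] (G : SimpleGraph V) : ℕ :=
  sInf {k | ∃ D : Finset V, D.card = k ∧ DomSet G ↑D}

/-- The independence number of `G`. -/
noncomputable def indepNum {V : Type*} [Fintype V] (G : SimpleGraph V) : ℕ :=
  sSup {k | ∃ S : Finset V, S.card = k ∧ IndepSet G ↑S}

/-- Sum of the first `k` entries `d_1 + ... + d_k` (0-indexed: indices `< k`). -/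
def psum {n : ℕ} (d : Fin n → ℕ) (k : ℕ) : ℕ := ∑ i : Fin n, if (i : ℕ) < k then d i else 0

/-- Sum of the remaining entries `d_{k+1} + ... + d_n` (0-indexed: indices `≥ k`). -/
def ssum {n : ℕ} (d : Fin n → ℕ) (k : ℕ) : ℕ := ∑ i : Fin n, if k ≤ (i : ℕ) then d i else 0

/-- Slater's bound `sl(d) = min{k ∈ [n] : d_1 + ... + d_k ≥ n - k}`. -/
noncomputable def slater (n : ℕ) (d : Fin n → ℕ) : ℕ := sInf {k | 1 ≤ k ∧ k ≤ n ∧ n - k ≤ psum d k}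

/-- The annihilation number `a(d) = n - min{k ∈ [n] : Σ_{i≤k} d_i ≥ Σ_{i>k} d_i}`. -/
noncomputable def annih (n : ℕ) (d : Fin n → ℕ) : ℕ := n - sInf {k | 1 ≤ k ∧ k ≤ n ∧ ssum d k ≤ psum d k}

/-- The number of entries of `d` equal to `j`. -/
def nCount {n : ℕ} (d : Fin n → ℕ) (j : ℕ) : ℕ := (Finset.univ.filter fun i => d i = j).card

/-- The number of entries of `d` that are at least `2`. -/
def nGe2 {n : ℕ} (d : Fin n → ℕ) : ℕ := (Finset.univ.filter fun i => 2 ≤ d i).card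

/-- `F` is a forest realization of the degree sequence `d`. -/
def IsForestReal {n : ℕ} (d : Fin n → ℕ) (F : SimpleGraph (Fin n)) : Prop :=
  F.IsAcyclic ∧ ∀ i, deg F i = d i

/-- The minimum domination number over all forest realizations of `d`. -/
noncomputable def gammaFmin {n : ℕ} (d : Fin n → ℕ) : ℕ :=
  sInf {m | ∃ F : SimpleGraph (Fin n), IsForestReal d F ∧ domNum F = m}

/-- The maximum independence number over all forest realizations of `d`. -/
noncomputable def alphaFmax {n : ℕ} (d : Fin n → ℕ) : ℕ :=
  sSup {m | ∃ F : SimpleGraph (Fin n), IsForestReal d F ∧ indepNum F = m}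

private lemma sum_ite_const_aux {n : ℕ} (a b c : ℕ) (hb : b ≤ n) :
    (∑ i : Fin n, if a ≤ (i : ℕ) ∧ (i : ℕ) < b then c else 0) = (b - a) * c := by
  rw [Fin.sum_univ_eq_sum_range (fun i => if a ≤ i ∧ i < b then c else 0) n]
  have h1 : ∀ i ∈ Finset.range n,
      (if a ≤ i ∧ i < b then c else 0) = if i ∈ Finset.Ico a b then c else 0 := by
    intro i _; simp [Finset.mem_Ico]
  rw [Finset.sum_congr rfl h1, Finset.sum_ite_mem]
  have h2 : Finset.range n ∩ Finset.Ico a b = Finset.Ico a b := by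
    rw [Finset.inter_eq_right]
    intro x hx
    simp only [Finset.mem_Ico] at hx
    simp only [Finset.mem_range]
    omega
  rw [h2, Finset.sum_const, Nat.card_Ico, smul_eq_mul]

theorem stmt6 {n : ℕ} (d : Fin n → ℕ) (hd : Antitone d) (hpos : ∀ i, 1 ≤ d i)
    (heven : Even (∑ i, d i)) (hsum : ∑ i, d i ≤ 2 * n - 2)
    (h1 : psum d (nGe2 d) ≤ nCount d 1) :
    slater n d = n - annih n d ∧
      slater n d = nGe2 d + (nCount d 1 - psum d (nGe2 d)) / 2 := by
  classical
  rcases Nat.eq_zero_or_pos n with hn0 | hn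
  · subst hn0
    have hset : ∀ (Q : ℕ → Prop), {k | 1 ≤ k ∧ k ≤ 0 ∧ Q k} = (∅ : Set ℕ) := by
      intro Q; ext k; simp; omega
    have h01 : slater 0 d = 0 := by
      unfold slater; rw [hset]; exact Nat.sInf_empty
    have h02 : annih 0 d = 0 := by
      unfold annih; rw [hset]; simp
    have h03 : nGe2 d = 0 := by simp [nGe2]
    have h04 : nCount d 1 = 0 := by simp [nCount]
    rw [h01, h02, h03, h04]
    simp
  set t := nGe2 d with htdef
  have htn : t ≤ n := by
    have := Finset.card_filter_le (Finset.univ : Finset (Fin n)) (fun i => 2 ≤ d i)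
    simpa [htdef, nGe2] using this
  have hB : ∀ i : Fin n, t ≤ (i : ℕ) → d i = 1 := by
    intro i hi
    by_contra hne
    have h2 : 2 ≤ d i := by have := hpos i; omega
    have hsub : Finset.Iic i ⊆ Finset.univ.filter (fun j => 2 ≤ d j) := by
      intro j hj
      simp only [Finset.mem_Iic] at hj
      simp only [Finset.mem_filter, Finset.mem_univ, true_and]
      exact le_trans h2 (hd hj)
    have hc := Finset.card_le_card hsub
    rw [Fin.card_Iic] at hc
    have : Finset.card (Finset.univ.filter (fun j => 2 ≤ d j)) = t := rfl
    omega
  have hA : ∀ i : Fin n, (i : ℕ) < t → 2 ≤ d i := by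
    intro i hi
    by_contra hlt
    have hd1 : d i = 1 := by have := hpos i; omega
    have hsub : Finset.univ.filter (fun j => 2 ≤ d j) ⊆ Finset.Iio i := by
      intro j hj
      simp only [Finset.mem_filter, Finset.mem_univ, true_and] at hj
      rw [Finset.mem_Iio]
      by_contra hji
      have : d j ≤ d i := hd (le_of_not_gt hji)
      omega
    have hc := Finset.card_le_card hsub
    rw [Fin.card_Iio] at hc
    have : Finset.card (Finset.univ.filter (fun j => 2 ≤ d j)) = t := rfl
    omega
  have hn1 : nCount d 1 = n - t := by
    have hcongr : Finset.univ.filter (fun i : Fin n => d i = 1)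
        = Finset.univ.filter (fun i : Fin n => ¬ 2 ≤ d i) := by
      apply Finset.filter_congr
      intro i _
      have := hpos i
      constructor <;> intro h <;> omega
    have hsplit := Finset.card_filter_add_card_filter_not
      (s := (Finset.univ : Finset (Fin n))) (p := fun i : Fin n => 2 ≤ d i)
    have hcard : (Finset.univ : Finset (Fin n)).card = n := by simp
    have hteq : Finset.card (Finset.univ.filter (fun j : Fin n => 2 ≤ d j)) = t := rfl
    rw [nCount, hcongr]
    omega
  set P := psum d t with hPdef
  have hssum : ∀ k, ssum d k + psum d k = ∑ i, d i := by
    intro k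
    rw [ssum, psum, ← Finset.sum_add_distrib]
    apply Finset.sum_congr rfl
    intro i _
    split_ifs <;> omega
  have hpsum : ∀ k, t ≤ k → k ≤ n → psum d k = P + (k - t) := by
    intro k hk hkn
    have hdecomp : psum d k = psum d t
        + ∑ i : Fin n, (if t ≤ (i : ℕ) ∧ (i : ℕ) < k then 1 else 0) := by
      rw [psum, psum, ← Finset.sum_add_distrib]
      apply Finset.sum_congr rfl
      intro i _
      rcases lt_or_ge (i : ℕ) t with h' | h'
      · split_ifs <;> omega
      · have hdi := hB i h'
        split_ifs <;> omega
    rw [hdecomp, sum_ite_const_aux t k 1 hkn, mul_one]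
  have hplow : ∀ m, m ≤ t → psum d m + 2 * (t - m) ≤ P := by
    intro m hm
    have hdecomp : psum d t = psum d m
        + ∑ i : Fin n, (if m ≤ (i : ℕ) ∧ (i : ℕ) < t then d i else 0) := by
      rw [psum, psum, ← Finset.sum_add_distrib]
      apply Finset.sum_congr rfl
      intro i _
      split_ifs <;> omega
    have hge : (∑ i : Fin n, if m ≤ (i : ℕ) ∧ (i : ℕ) < t then 2 else 0)
        ≤ ∑ i : Fin n, (if m ≤ (i : ℕ) ∧ (i : ℕ) < t then d i else 0) := by
      apply Finset.sum_le_sum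
      intro i _
      split_ifs with hcond
      · exact hA i hcond.2
      · exact le_refl 0
    have hcst := sum_ite_const_aux m t 2 htn
    rw [hPdef, hdecomp]
    omega
  have hS : ∑ i, d i = P + (n - t) := by
    have h0 : psum d n = ∑ i, d i := by
      rw [psum]
      apply Finset.sum_congr rfl
      intro i _
      simp [i.isLt]
    rw [← h0, hpsum n htn le_rfl]
  have hPn1 : P ≤ n - t := by rw [hn1] at h1; exact h1
  obtain ⟨s, hs⟩ := heven
  have heq : n - t = P + ((s - P) + (s - P)) := by omega
  set h := s - P with hhdef
  have hkn : t + h ≤ n := by omega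
  have hk1 : 1 ≤ t + h := by
    rcases Nat.eq_zero_or_pos t with h0 | h0
    · have hP0 : P = 0 := by
        rw [hPdef, h0, psum]
        simp
      omega
    · omega
  have hmem1 : (t + h) ∈ {k | 1 ≤ k ∧ k ≤ n ∧ n - k ≤ psum d k} := by
    refine ⟨hk1, hkn, ?_⟩
    rw [hpsum (t + h) (by omega) hkn]
    omega
  have hslater : slater n d = t + h := by
    rw [slater]
    apply le_antisymm
    · exact Nat.sInf_le hmem1
    · apply le_csInf ⟨t + h, hmem1⟩
      rintro m ⟨hm1, hmn, hmc⟩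
      by_cases hmt : t ≤ m
      · rw [hpsum m hmt hmn] at hmc
        omega
      · exfalso
        have := hplow m (by omega)
        omega
  have hmem2 : (t + h) ∈ {k | 1 ≤ k ∧ k ≤ n ∧ ssum d k ≤ psum d k} := by
    refine ⟨hk1, hkn, ?_⟩
    have h2 := hssum (t + h)
    rw [hpsum (t + h) (by omega) hkn] at h2 ⊢
    omega
  have hannih : sInf {k | 1 ≤ k ∧ k ≤ n ∧ ssum d k ≤ psum d k} = t + h := by
    apply le_antisymm
    · exact Nat.sInf_le hmem2
    · apply le_csInf ⟨t + h, hmem2⟩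
      rintro m ⟨hm1, hmn, hmc⟩
      by_cases hmt : t ≤ m
      · have h2 := hssum m
        rw [hpsum m hmt hmn] at h2 hmc
        omega
      · exfalso
        have h2 := hssum m
        have h3 := hplow m (by omega)
        omega
  have hannih' : annih n d = n - (t + h) := by rw [annih, hannih]
  have hrhs : nCount d 1 - psum d t = h + h := by omega
  constructor
  · rw [hslater, hannih']
    omega
  · rw [hslater]
    omega
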